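/- arXiv:0809.2052 — 3 statements merged into one kernel-verified Lean document; each statement's English description precedes it below -/
import Mathlib

section
/- For every v > 0 and r > 0 one has r⁻¹ · d/dr ( r · d/dr [J₀(rv)] ) = −v² J₀(rv); equivalently, J₀''(x) + x⁻¹ J₀'(x) + J₀(x) = 0 for all x > 0. -/
open Real MeasureTheory

noncomputable def J0 (x : ℝ) : ℝ := (1 / π) * ∫ θ in (0:ℝ)..π, Real.cos (x * Real.sin θ)

noncomputable def J1 (x : ℝ) : ℝ := (1 / π) * ∫ θ in (0:ℝ)..π, Real.cos (θ - x * Real.sin θ)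

open intervalIntegral Metric in
lemma hasDerivAt_I0 (x : ℝ) :
    HasDerivAt (fun x => ∫ θ in (0:ℝ)..π, Real.cos (x * Real.sin θ))
      (∫ θ in (0:ℝ)..π, -Real.sin (x * Real.sin θ) * Real.sin θ) x := by
  have h := intervalIntegral.hasDerivAt_integral_of_dominated_loc_of_deriv_le
      (F := fun x θ => Real.cos (x * Real.sin θ))
      (F' := fun x θ => -Real.sin (x * Real.sin θ) * Real.sin θ)
      (a := 0) (b := π) (μ := volume) (x₀ := x) (bound := fun _ => 1)
      (s := Metric.ball x 1) (Metric.ball_mem_nhds x one_pos)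
      (Filter.Eventually.of_forall fun y =>
        (Continuous.aestronglyMeasurable (by continuity)))
      ((Continuous.intervalIntegrable (by continuity) _ _))
      (Continuous.aestronglyMeasurable (by continuity))
      (Filter.Eventually.of_forall fun θ _ y _ => by
        have h1 : |Real.sin (y * Real.sin θ)| ≤ 1 := Real.abs_sin_le_one _
        have h2 : |Real.sin θ| ≤ 1 := Real.abs_sin_le_one _
        calc ‖-Real.sin (y * Real.sin θ) * Real.sin θ‖
            = |Real.sin (y * Real.sin θ)| * |Real.sin θ| := by
              rw [Real.norm_eq_abs, abs_mul, abs_neg]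
          _ ≤ 1 * 1 := mul_le_mul h1 h2 (abs_nonneg _) zero_le_one
          _ = 1 := by ring)
      ((Continuous.intervalIntegrable continuous_const _ _))
      (Filter.Eventually.of_forall fun θ _ y _ => by
        simpa using ((hasDerivAt_id y).mul_const (Real.sin θ)).cos)
  exact h.2

open intervalIntegral Metric in
lemma hasDerivAt_I1 (x : ℝ) :
    HasDerivAt (fun x => ∫ θ in (0:ℝ)..π, -Real.sin (x * Real.sin θ) * Real.sin θ)
      (∫ θ in (0:ℝ)..π, -(Real.cos (x * Real.sin θ) * Real.sin θ) * Real.sin θ) x := by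
  have h := intervalIntegral.hasDerivAt_integral_of_dominated_loc_of_deriv_le
      (F := fun x θ => -Real.sin (x * Real.sin θ) * Real.sin θ)
      (F' := fun x θ => -(Real.cos (x * Real.sin θ) * Real.sin θ) * Real.sin θ)
      (a := 0) (b := π) (μ := volume) (x₀ := x) (bound := fun _ => 1)
      (s := Metric.ball x 1) (Metric.ball_mem_nhds x one_pos)
      (Filter.Eventually.of_forall fun y =>
        (Continuous.aestronglyMeasurable (by continuity)))
      ((Continuous.intervalIntegrable (by continuity) _ _))
      (Continuous.aestronglyMeasurable (by continuity))
      (Filter.Eventually.of_forall fun θ _ y _ => by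
        have h1 : |Real.cos (y * Real.sin θ)| ≤ 1 := Real.abs_cos_le_one _
        have h2 : |Real.sin θ| ≤ 1 := Real.abs_sin_le_one _
        calc ‖-(Real.cos (y * Real.sin θ) * Real.sin θ) * Real.sin θ‖
            = |Real.cos (y * Real.sin θ)| * |Real.sin θ| * |Real.sin θ| := by
              rw [Real.norm_eq_abs, abs_mul, abs_neg, abs_mul]
          _ ≤ 1 * 1 * 1 :=
              mul_le_mul (mul_le_mul h1 h2 (abs_nonneg _) zero_le_one) h2 (abs_nonneg _)
                (by positivity)
          _ = 1 := by ring)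
      ((Continuous.intervalIntegrable continuous_const _ _))
      (Filter.Eventually.of_forall fun θ _ y _ => by
        have := (((hasDerivAt_id y).mul_const (Real.sin θ)).sin).neg.mul_const (Real.sin θ)
        simpa using this)
  exact h.2

lemma key_integral (x : ℝ) :
    (∫ θ in (0:ℝ)..π,
      (x * Real.cos θ ^ 2 * Real.cos (x * Real.sin θ) - Real.sin θ * Real.sin (x * Real.sin θ)))
      = 0 := by
  have h : ∀ θ ∈ Set.uIcc (0:ℝ) π,
      HasDerivAt (fun θ => Real.cos θ * Real.sin (x * Real.sin θ))
        (x * Real.cos θ ^ 2 * Real.cos (x * Real.sin θ)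
          - Real.sin θ * Real.sin (x * Real.sin θ)) θ := by
    intro θ _
    have h1 : HasDerivAt (fun θ => Real.sin (x * Real.sin θ))
        (Real.cos (x * Real.sin θ) * (x * Real.cos θ)) θ :=
      ((hasDerivAt_sin θ).const_mul x).sin
    have := (hasDerivAt_cos θ).fun_mul h1
    convert this using 1
    all_goals first | rfl | ring
  have hint : IntervalIntegrable (fun θ =>
      x * Real.cos θ ^ 2 * Real.cos (x * Real.sin θ)
        - Real.sin θ * Real.sin (x * Real.sin θ)) volume 0 π :=
    Continuous.intervalIntegrable (by continuity) _ _
  rw [intervalIntegral.integral_eq_sub_of_hasDerivAt h hint]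
  simp

lemma hasDerivAt_J0 (x : ℝ) :
    HasDerivAt J0 ((1 / π) * ∫ θ in (0:ℝ)..π, -Real.sin (x * Real.sin θ) * Real.sin θ) x :=
  (hasDerivAt_I0 x).const_mul (1 / π)

lemma deriv_J0 (x : ℝ) :
    deriv J0 x = (1 / π) * ∫ θ in (0:ℝ)..π, -Real.sin (x * Real.sin θ) * Real.sin θ :=
  (hasDerivAt_J0 x).deriv

lemma hasDerivAt_deriv_J0 (x : ℝ) :
    HasDerivAt (deriv J0)
      ((1 / π) * ∫ θ in (0:ℝ)..π, -(Real.cos (x * Real.sin θ) * Real.sin θ) * Real.sin θ) x := by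
  have h : deriv J0 = fun x =>
      (1 / π) * ∫ θ in (0:ℝ)..π, -Real.sin (x * Real.sin θ) * Real.sin θ :=
    funext fun x => deriv_J0 x
  rw [h]
  exact (hasDerivAt_I1 x).const_mul (1 / π)

lemma ode_J0 (x : ℝ) (hx : 0 < x) :
    iteratedDeriv 2 J0 x + x⁻¹ * deriv J0 x + J0 x = 0 := by
  have hpi : (π : ℝ) ≠ 0 := Real.pi_ne_zero
  have h2 : iteratedDeriv 2 J0 x
      = (1 / π) * ∫ θ in (0:ℝ)..π, -(Real.cos (x * Real.sin θ) * Real.sin θ) * Real.sin θ := by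
    rw [iteratedDeriv_succ, iteratedDeriv_one]
    exact (hasDerivAt_deriv_J0 x).deriv
  rw [h2, deriv_J0, J0]
  have hI1 : IntervalIntegrable (fun θ =>
      -(Real.cos (x * Real.sin θ) * Real.sin θ) * Real.sin θ) volume 0 π :=
    Continuous.intervalIntegrable (by continuity) _ _
  have hI2 : IntervalIntegrable (fun θ =>
      x⁻¹ * (-Real.sin (x * Real.sin θ) * Real.sin θ)) volume 0 π :=
    Continuous.intervalIntegrable (by continuity) _ _
  have hI3 : IntervalIntegrable (fun θ => Real.cos (x * Real.sin θ)) volume 0 π :=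
    Continuous.intervalIntegrable (by continuity) _ _
  have hsum : (∫ θ in (0:ℝ)..π, -(Real.cos (x * Real.sin θ) * Real.sin θ) * Real.sin θ)
      + (∫ θ in (0:ℝ)..π, x⁻¹ * (-Real.sin (x * Real.sin θ) * Real.sin θ))
      + (∫ θ in (0:ℝ)..π, Real.cos (x * Real.sin θ))
      = ∫ θ in (0:ℝ)..π, (-(Real.cos (x * Real.sin θ) * Real.sin θ) * Real.sin θ
          + x⁻¹ * (-Real.sin (x * Real.sin θ) * Real.sin θ) + Real.cos (x * Real.sin θ)) := by
    rw [← intervalIntegral.integral_add hI1 hI2,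
        ← intervalIntegral.integral_add (hI1.add hI2) hI3]
  have hzero : (∫ θ in (0:ℝ)..π, (-(Real.cos (x * Real.sin θ) * Real.sin θ) * Real.sin θ
      + x⁻¹ * (-Real.sin (x * Real.sin θ) * Real.sin θ) + Real.cos (x * Real.sin θ))) = 0 := by
    have heq : ∀ θ ∈ Set.uIcc (0:ℝ) π,
        (-(Real.cos (x * Real.sin θ) * Real.sin θ) * Real.sin θ
          + x⁻¹ * (-Real.sin (x * Real.sin θ) * Real.sin θ) + Real.cos (x * Real.sin θ))
        = x⁻¹ * (x * Real.cos θ ^ 2 * Real.cos (x * Real.sin θ)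
            - Real.sin θ * Real.sin (x * Real.sin θ)) := by
      intro θ _
      have hc : Real.cos θ ^ 2 = 1 - Real.sin θ ^ 2 := Real.cos_sq' θ
      rw [hc]
      have hxne : x ≠ 0 := hx.ne'
      field_simp
      ring
    rw [intervalIntegral.integral_congr heq, intervalIntegral.integral_const_mul,
        key_integral, mul_zero]
  have : (1 / π) * ((∫ θ in (0:ℝ)..π, -(Real.cos (x * Real.sin θ) * Real.sin θ) * Real.sin θ)
      + (∫ θ in (0:ℝ)..π, x⁻¹ * (-Real.sin (x * Real.sin θ) * Real.sin θ))
      + (∫ θ in (0:ℝ)..π, Real.cos (x * Real.sin θ))) = 0 := by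
    rw [hsum, hzero, mul_zero]
  rw [intervalIntegral.integral_const_mul] at this
  linear_combination this

theorem stmt2 :
    (∀ v r : ℝ, 0 < v → 0 < r →
      r⁻¹ * deriv (fun ρ => ρ * deriv (fun ρ' => J0 (ρ' * v)) ρ) r = -(v ^ 2) * J0 (r * v))
    ∧ (∀ x : ℝ, 0 < x → iteratedDeriv 2 J0 x + x⁻¹ * deriv J0 x + J0 x = 0) := by
  constructor
  · intro v r hv hr
    have hchain : ∀ ρ : ℝ, deriv (fun ρ' => J0 (ρ' * v)) ρ = deriv J0 (ρ * v) * v := by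
      intro ρ
      exact (HasDerivAt.deriv (((hasDerivAt_J0 (ρ * v)).comp ρ
        (hasDerivAt_mul_const v)))).trans (show _ = deriv J0 (ρ * v) * v by rw [deriv_J0])
    have h1 : deriv (fun ρ => ρ * deriv (fun ρ' => J0 (ρ' * v)) ρ) r
        = deriv (fun ρ => ρ * (deriv J0 (ρ * v) * v)) r := by
      congr 1
      funext ρ
      rw [hchain]
    have h2 : HasDerivAt (fun ρ => ρ * (deriv J0 (ρ * v) * v))
        (1 * (deriv J0 (r * v) * v) + r * (((1 / π) *
          ∫ θ in (0:ℝ)..π, -(Real.cos (r * v * Real.sin θ) * Real.sin θ) * Real.sin θ)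
            * v * v)) r := by
      have hin : HasDerivAt (fun ρ => deriv J0 (ρ * v) * v)
          (((1 / π) * ∫ θ in (0:ℝ)..π,
            -(Real.cos (r * v * Real.sin θ) * Real.sin θ) * Real.sin θ) * v * v) r := by
        have := ((hasDerivAt_deriv_J0 (r * v)).comp r
          (hasDerivAt_mul_const v)).mul_const v
        simpa [mul_comm, mul_assoc, mul_left_comm] using this
      simpa using (hasDerivAt_id r).fun_mul hin
    rw [h1, h2.deriv]
    have hode := ode_J0 (r * v) (mul_pos hr hv)
    have hdd : iteratedDeriv 2 J0 (r * v)
        = (1 / π) * ∫ θ in (0:ℝ)..π,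
            -(Real.cos (r * v * Real.sin θ) * Real.sin θ) * Real.sin θ := by
      rw [iteratedDeriv_succ, iteratedDeriv_one]
      exact (hasDerivAt_deriv_J0 (r * v)).deriv
    rw [hdd] at hode
    have hrv : (r * v) ≠ 0 := (mul_pos hr hv).ne'
    have hr0 : r ≠ 0 := hr.ne'
    have hv0 : v ≠ 0 := hv.ne'
    field_simp at hode ⊢
    nlinarith [hode]
  · exact fun x hx => ode_J0 x hx
end

section
/- Fix r_det > 0, r ∈ (0, r_det] and k ∈ ℝ. Then J₁(r_det v_n) ≠ 0 for every n ∈ ℕ, and there exists a constant C such that | v_n J₀(r v_n) / ( (k²+v_n²) · J₁(r_det v_n)³ ) | ≤ C for all n ∈ ℕ; that is, the data-independent factors in the series inversion formula are uniformly bounded in n. -/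
open Real MeasureTheory

noncomputable def g0 (x : ℝ) : ℝ :=
  (1 / π) * ∫ θ in (0:ℝ)..π, Real.sin (x * Real.sin θ) * Real.sin θ

noncomputable def g2 (x : ℝ) : ℝ :=
  (1 / π) * ∫ θ in (0:ℝ)..π, Real.cos (x * Real.sin θ) * Real.sin θ ^ 2

lemma J0_hasDeriv (x : ℝ) : HasDerivAt J0 (-g0 x) x := by
  have h := intervalIntegral.hasDerivAt_integral_of_dominated_loc_of_deriv_le
      (F := fun x θ => Real.cos (x * Real.sin θ))
      (F' := fun x θ => -(Real.sin (x * Real.sin θ) * Real.sin θ))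
      (bound := fun _ => 1) (a := 0) (b := π) (x₀ := x) (μ := volume) (s := Metric.ball x 1)
      (Metric.ball_mem_nhds x one_pos)
      (Filter.Eventually.of_forall fun y =>
        (Continuous.aestronglyMeasurable (by fun_prop)))
      ((Continuous.intervalIntegrable (by fun_prop)) _ _)
      (Continuous.aestronglyMeasurable (by fun_prop))
      (Filter.Eventually.of_forall fun t _ y _ => by
        simp only [norm_neg, norm_mul, Real.norm_eq_abs]
        exact mul_le_one₀ (Real.abs_sin_le_one _) (abs_nonneg _) (Real.abs_sin_le_one _))
      ((Continuous.intervalIntegrable continuous_const) _ _)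
      (Filter.Eventually.of_forall fun t _ y _ => by
        have h1 : HasDerivAt (fun z : ℝ => z * Real.sin t) (Real.sin t) y :=
          hasDerivAt_mul_const _
        have := (Real.hasDerivAt_cos (y * Real.sin t)).comp y h1
        simpa [Function.comp_def] using this)
  have h2 := h.2.const_mul (1 / π)
  have : (1 / π) * ∫ θ in (0:ℝ)..π, -(Real.sin (x * Real.sin θ) * Real.sin θ) = -g0 x := by
    rw [intervalIntegral.integral_neg, g0]; ring
  rw [this] at h2
  exact h2

lemma g0_hasDeriv (x : ℝ) : HasDerivAt g0 (g2 x) x := by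
  have h := intervalIntegral.hasDerivAt_integral_of_dominated_loc_of_deriv_le
      (F := fun x θ => Real.sin (x * Real.sin θ) * Real.sin θ)
      (F' := fun x θ => Real.cos (x * Real.sin θ) * Real.sin θ * Real.sin θ)
      (bound := fun _ => 1) (a := 0) (b := π) (x₀ := x) (μ := volume) (s := Metric.ball x 1)
      (Metric.ball_mem_nhds x one_pos)
      (Filter.Eventually.of_forall fun y =>
        (Continuous.aestronglyMeasurable (by fun_prop)))
      ((Continuous.intervalIntegrable (by fun_prop)) _ _)
      (Continuous.aestronglyMeasurable (by fun_prop))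
      (Filter.Eventually.of_forall fun t _ y _ => by
        simp only [norm_mul, Real.norm_eq_abs]
        exact mul_le_one₀
          (mul_le_one₀ (Real.abs_cos_le_one _) (abs_nonneg _) (Real.abs_sin_le_one _))
          (abs_nonneg _) (Real.abs_sin_le_one _))
      ((Continuous.intervalIntegrable continuous_const) _ _)
      (Filter.Eventually.of_forall fun t _ y _ => by
        have h1 : HasDerivAt (fun z : ℝ => z * Real.sin t) (Real.sin t) y :=
          hasDerivAt_mul_const _
        have h2 := ((Real.hasDerivAt_sin (y * Real.sin t)).comp y h1).mul_const (Real.sin t)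
        simpa using h2)
  have h2 := h.2.const_mul (1 / π)
  have : (1 / π) * ∫ θ in (0:ℝ)..π,
      Real.cos (x * Real.sin θ) * Real.sin θ * Real.sin θ = g2 x := by
    rw [g2]
    congr 1
    apply intervalIntegral.integral_congr
    intro θ _
    ring
  rw [this] at h2
  exact h2

lemma identity1 (x : ℝ) :
    ∫ θ in (0:ℝ)..π, x * (Real.cos θ * Real.cos (x * Real.sin θ)) = 0 := by
  have h : ∀ θ ∈ Set.uIcc (0:ℝ) π,
      HasDerivAt (fun θ => Real.sin (x * Real.sin θ))
        (x * (Real.cos θ * Real.cos (x * Real.sin θ))) θ := by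
    intro θ _
    have h1 : HasDerivAt (fun θ : ℝ => x * Real.sin θ) (x * Real.cos θ) θ :=
      (Real.hasDerivAt_sin θ).const_mul x
    have h2 := (Real.hasDerivAt_sin (x * Real.sin θ)).comp θ h1
    convert h2 using 1 <;> try rfl
    ring
  have := intervalIntegral.integral_eq_sub_of_hasDerivAt h
    ((Continuous.intervalIntegrable (by fun_prop)) _ _)
  simp [Real.sin_pi] at this
  simpa using this

lemma identity2 (x : ℝ) : ∫ θ in (0:ℝ)..π,
    (x * (Real.cos (x * Real.sin θ) * Real.cos θ ^ 2) - Real.sin (x * Real.sin θ) * Real.sin θ)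
    = 0 := by
  have h : ∀ θ ∈ Set.uIcc (0:ℝ) π,
      HasDerivAt (fun θ => Real.cos θ * Real.sin (x * Real.sin θ))
        (x * (Real.cos (x * Real.sin θ) * Real.cos θ ^ 2)
          - Real.sin (x * Real.sin θ) * Real.sin θ) θ := by
    intro θ _
    have h1 : HasDerivAt (fun θ : ℝ => x * Real.sin θ) (x * Real.cos θ) θ :=
      (Real.hasDerivAt_sin θ).const_mul x
    have h2 := (Real.hasDerivAt_sin (x * Real.sin θ)).comp θ h1
    have h3 := (Real.hasDerivAt_cos θ).mul h2
    convert h3 using 1 <;> try rfl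
    simp [Function.comp]
    ring
  have := intervalIntegral.integral_eq_sub_of_hasDerivAt h
    ((Continuous.intervalIntegrable (by fun_prop)) _ _)
  simp [Real.sin_pi] at this
  simpa using this

lemma J1_eq_g0 {x : ℝ} (hx : x ≠ 0) : J1 x = g0 x := by
  have I1 := identity1 x
  rw [intervalIntegral.integral_const_mul] at I1
  have I1' : ∫ θ in (0:ℝ)..π, Real.cos θ * Real.cos (x * Real.sin θ) = 0 :=
    (mul_eq_zero.1 I1).resolve_left hx
  have e : ∫ θ in (0:ℝ)..π, Real.cos (θ - x * Real.sin θ)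
      = (∫ θ in (0:ℝ)..π, Real.cos θ * Real.cos (x * Real.sin θ))
        + ∫ θ in (0:ℝ)..π, Real.sin (x * Real.sin θ) * Real.sin θ := by
    rw [← intervalIntegral.integral_add ((Continuous.intervalIntegrable (by fun_prop)) _ _)
      ((Continuous.intervalIntegrable (by fun_prop)) _ _)]
    apply intervalIntegral.integral_congr
    intro θ _
    simp only [Real.cos_sub]
    ring
  rw [J1, g0, e, I1', zero_add]

lemma ode (x : ℝ) : x * g2 x = x * J0 x - g0 x := by
  have I2 := identity2 x
  have e : ∫ θ in (0:ℝ)..π,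
      (x * (Real.cos (x * Real.sin θ) * Real.cos θ ^ 2) - Real.sin (x * Real.sin θ) * Real.sin θ)
      = x * (∫ θ in (0:ℝ)..π, Real.cos (x * Real.sin θ))
        - x * (∫ θ in (0:ℝ)..π, Real.cos (x * Real.sin θ) * Real.sin θ ^ 2)
        - ∫ θ in (0:ℝ)..π, Real.sin (x * Real.sin θ) * Real.sin θ := by
    rw [← intervalIntegral.integral_const_mul, ← intervalIntegral.integral_const_mul,
      ← intervalIntegral.integral_sub ((Continuous.intervalIntegrable (by fun_prop)) _ _)
        ((Continuous.intervalIntegrable (by fun_prop)) _ _),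
      ← intervalIntegral.integral_sub
        (((Continuous.intervalIntegrable (by fun_prop)) _ _).sub
          ((Continuous.intervalIntegrable (by fun_prop)) _ _))
        ((Continuous.intervalIntegrable (by fun_prop)) _ _)]
    apply intervalIntegral.integral_congr
    intro θ _
    simp only [Real.cos_sq']
    ring
  rw [e] at I2
  have hπ : (π:ℝ) ≠ 0 := Real.pi_ne_zero
  rw [J0, g0, g2]
  linear_combination (-(1/π)) * I2

noncomputable def uu (x : ℝ) : ℝ := Real.sqrt x * J0 x
noncomputable def pp (x : ℝ) : ℝ := Real.sqrt x * (-g0 x) + J0 x / (2 * Real.sqrt x)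
noncomputable def EE (x : ℝ) : ℝ := pp x ^ 2 + uu x ^ 2

lemma uu_hasDeriv {x : ℝ} (hx : 0 < x) : HasDerivAt uu (pp x) x := by
  have h := (Real.hasDerivAt_sqrt hx.ne').mul (J0_hasDeriv x)
  have : HasDerivAt uu (1 / (2 * Real.sqrt x) * J0 x + Real.sqrt x * -g0 x) x := h
  convert this using 1
  rw [pp]; ring

lemma pp_hasDeriv {x : ℝ} (hx : 0 < x) :
    HasDerivAt pp (-(uu x / (4 * x ^ 2)) - uu x) x := by
  have hs0 : Real.sqrt x ≠ 0 := ne_of_gt (Real.sqrt_pos.2 hx)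
  have h1 := (Real.hasDerivAt_sqrt hx.ne').mul ((g0_hasDeriv x).neg)
  have h2d : HasDerivAt (fun y : ℝ => 2 * Real.sqrt y) (2 * (1 / (2 * Real.sqrt x))) x :=
    (Real.hasDerivAt_sqrt hx.ne').const_mul 2
  have h2 := (J0_hasDeriv x).div h2d (by positivity)
  have h : HasDerivAt pp
      ((1 / (2 * Real.sqrt x) * -g0 x + Real.sqrt x * -g2 x)
        + ((-g0 x * (2 * Real.sqrt x) - J0 x * (2 * (1 / (2 * Real.sqrt x))))
            / (2 * Real.sqrt x) ^ 2)) x := h1.add h2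
  convert h using 1
  have hg2 : g2 x = J0 x - g0 x / x := by
    have := ode x
    field_simp
    linarith
  rw [hg2, uu]
  have hss : Real.sqrt x ^ 2 = x := Real.sq_sqrt hx.le
  generalize Real.sqrt x = s at hs0 hss ⊢
  rw [← hss]
  generalize J0 (s ^ 2) = A
  generalize g0 (s ^ 2) = B
  field_simp
  ring

lemma EE_hasDeriv {x : ℝ} (hx : 0 < x) :
    HasDerivAt EE (-(pp x * uu x) / (2 * x ^ 2)) x := by
  have h := ((pp_hasDeriv hx).pow 2).add ((uu_hasDeriv hx).pow 2)
  have h' : HasDerivAt EE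
      (2 * pp x ^ 1 * (-(uu x / (4 * x ^ 2)) - uu x) + 2 * uu x ^ 1 * pp x) x := by
    convert h using 2 <;> first | rfl | norm_num
  convert h' using 1
  field_simp
  ring

noncomputable def FF1 (x : ℝ) : ℝ := EE x * Real.exp ((4 * x)⁻¹)
noncomputable def FF2 (x : ℝ) : ℝ := EE x * Real.exp (-(4 * x)⁻¹)

lemma inv4_hasDeriv {x : ℝ} (hx : 0 < x) :
    HasDerivAt (fun y : ℝ => (4 * y)⁻¹) (-4 / (4 * x) ^ 2) x := by
  have h : HasDerivAt (fun y : ℝ => 4 * y) 4 x := by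
    simpa using (hasDerivAt_id x).const_mul (4:ℝ)
  exact h.inv (by positivity)

lemma FF1_hasDeriv {x : ℝ} (hx : 0 < x) :
    HasDerivAt FF1 (-(pp x * uu x) / (2 * x ^ 2) * Real.exp ((4 * x)⁻¹)
      + EE x * (Real.exp ((4 * x)⁻¹) * (-4 / (4 * x) ^ 2))) x :=
  (EE_hasDeriv hx).mul ((Real.hasDerivAt_exp _).comp x (inv4_hasDeriv hx))

lemma FF2_hasDeriv {x : ℝ} (hx : 0 < x) :
    HasDerivAt FF2 (-(pp x * uu x) / (2 * x ^ 2) * Real.exp (-(4 * x)⁻¹)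
      + EE x * (Real.exp (-(4 * x)⁻¹) * (-(-4 / (4 * x) ^ 2)))) x :=
  (EE_hasDeriv hx).mul ((Real.hasDerivAt_exp _).comp x ((inv4_hasDeriv hx).neg))

lemma FF1_anti : AntitoneOn FF1 (Set.Ici 1) := by
  have hpos : ∀ x : ℝ, x ∈ Set.Ici (1:ℝ) → (0:ℝ) < x := fun x hx => lt_of_lt_of_le one_pos hx
  apply antitoneOn_of_deriv_nonpos (convex_Ici 1)
  · intro x hx
    exact (FF1_hasDeriv (hpos x hx)).continuousAt.continuousWithinAt
  · intro x hx
    rw [interior_Ici] at hx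
    exact (FF1_hasDeriv (hpos x (Set.Ioi_subset_Ici_self hx))).differentiableAt.differentiableWithinAt
  · intro x hx
    rw [interior_Ici] at hx
    have hx0 : (0:ℝ) < x := hpos x (Set.Ioi_subset_Ici_self hx)
    rw [(FF1_hasDeriv hx0).deriv]
    have he : (0:ℝ) < Real.exp ((4 * x)⁻¹) := Real.exp_pos _
    have key : -(pp x * uu x) / (2 * x ^ 2) + EE x * (-4 / (4 * x) ^ 2) ≤ 0 := by
      rw [EE]
      have e : -(pp x * uu x) / (2 * x ^ 2) + (pp x ^ 2 + uu x ^ 2) * (-4 / (4 * x) ^ 2)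
          = -((pp x + uu x) ^ 2) / (4 * x ^ 2) := by
        field_simp; ring
      rw [e]
      exact div_nonpos_of_nonpos_of_nonneg (neg_nonpos.2 (sq_nonneg _)) (by positivity)
    have h2 := mul_le_mul_of_nonneg_left key he.le
    have e3 : -(pp x * uu x) / (2 * x ^ 2) * Real.exp ((4 * x)⁻¹)
        + EE x * (Real.exp ((4 * x)⁻¹) * (-4 / (4 * x) ^ 2))
        = Real.exp ((4 * x)⁻¹) * (-(pp x * uu x) / (2 * x ^ 2) + EE x * (-4 / (4 * x) ^ 2)) := by
      ring
    rw [e3]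
    simpa using h2

lemma FF2_mono : MonotoneOn FF2 (Set.Ici 1) := by
  have hpos : ∀ x : ℝ, x ∈ Set.Ici (1:ℝ) → (0:ℝ) < x := fun x hx => lt_of_lt_of_le one_pos hx
  apply monotoneOn_of_deriv_nonneg (convex_Ici 1)
  · intro x hx
    exact (FF2_hasDeriv (hpos x hx)).continuousAt.continuousWithinAt
  · intro x hx
    rw [interior_Ici] at hx
    exact (FF2_hasDeriv (hpos x (Set.Ioi_subset_Ici_self hx))).differentiableAt.differentiableWithinAt
  · intro x hx
    rw [interior_Ici] at hx
    have hx0 : (0:ℝ) < x := hpos x (Set.Ioi_subset_Ici_self hx)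
    rw [(FF2_hasDeriv hx0).deriv]
    have he : (0:ℝ) < Real.exp (-(4 * x)⁻¹) := Real.exp_pos _
    have key : 0 ≤ -(pp x * uu x) / (2 * x ^ 2) + EE x * (-(-4 / (4 * x) ^ 2)) := by
      rw [EE]
      have e : -(pp x * uu x) / (2 * x ^ 2) + (pp x ^ 2 + uu x ^ 2) * (-(-4 / (4 * x) ^ 2))
          = (pp x - uu x) ^ 2 / (4 * x ^ 2) := by
        field_simp; ring
      rw [e]
      positivity
    have h2 := mul_le_mul_of_nonneg_left key he.le
    have e3 : -(pp x * uu x) / (2 * x ^ 2) * Real.exp (-(4 * x)⁻¹)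
        + EE x * (Real.exp (-(4 * x)⁻¹) * (-(-4 / (4 * x) ^ 2)))
        = Real.exp (-(4 * x)⁻¹) * (-(pp x * uu x) / (2 * x ^ 2) + EE x * (-(-4 / (4 * x) ^ 2))) := by
      ring
    rw [e3]
    simpa using h2

lemma EE_nonneg (x : ℝ) : 0 ≤ EE x := by rw [EE]; positivity

lemma EE_upper {x : ℝ} (hx : 1 ≤ x) : EE x ≤ EE 1 * Real.exp 4⁻¹ := by
  have hx0 : (0:ℝ) < x := lt_of_lt_of_le one_pos hx
  have h1 : EE x ≤ FF1 x := by
    rw [FF1]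
    exact le_mul_of_one_le_right (EE_nonneg x) (Real.one_le_exp (by positivity))
  have h2 : FF1 x ≤ FF1 1 := FF1_anti (Set.self_mem_Ici) hx hx
  calc EE x ≤ FF1 1 := le_trans h1 h2
  _ = EE 1 * Real.exp 4⁻¹ := by rw [FF1]; norm_num

lemma EE_lower {x : ℝ} (hx : 1 ≤ x) : EE 1 * Real.exp (-4⁻¹) ≤ EE x := by
  have hx0 : (0:ℝ) < x := lt_of_lt_of_le one_pos hx
  have h1 : FF2 x ≤ EE x := by
    rw [FF2]
    apply mul_le_of_le_one_right (EE_nonneg x)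
    exact Real.exp_le_one_iff.2 (neg_nonpos.2 (by positivity))
  have h2 : FF2 1 ≤ FF2 x := FF2_mono (Set.self_mem_Ici) hx hx
  calc EE 1 * Real.exp (-4⁻¹) = FF2 1 := by rw [FF2]; norm_num
  _ ≤ FF2 x := h2
  _ ≤ EE x := h1

lemma J0_abs_le (x : ℝ) : |J0 x| ≤ 1 := by
  rw [J0, abs_mul, abs_of_nonneg (by positivity : (0:ℝ) ≤ 1 / π)]
  have h := intervalIntegral.norm_integral_le_of_norm_le_const (C := 1)
    (f := fun θ => Real.cos (x * Real.sin θ)) (a := 0) (b := π)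
    (fun θ _ => by simpa using Real.abs_cos_le_one _)
  rw [Real.norm_eq_abs, sub_zero, abs_of_pos Real.pi_pos, one_mul] at h
  calc 1 / π * |∫ θ in (0:ℝ)..π, Real.cos (x * Real.sin θ)|
      ≤ 1 / π * π := mul_le_mul_of_nonneg_left h (by positivity)
  _ = 1 := by field_simp

lemma g0_abs_le (x : ℝ) : |g0 x| ≤ 1 := by
  rw [g0, abs_mul, abs_of_nonneg (by positivity : (0:ℝ) ≤ 1 / π)]
  have h := intervalIntegral.norm_integral_le_of_norm_le_const (C := 1)
    (f := fun θ => Real.sin (x * Real.sin θ) * Real.sin θ) (a := 0) (b := π)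
    (fun θ _ => by
      simp only [norm_mul, Real.norm_eq_abs]
      exact mul_le_one₀ (Real.abs_sin_le_one _) (abs_nonneg _) (Real.abs_sin_le_one _))
  rw [Real.norm_eq_abs, sub_zero, abs_of_pos Real.pi_pos, one_mul] at h
  calc 1 / π * |∫ θ in (0:ℝ)..π, Real.sin (x * Real.sin θ) * Real.sin θ|
      ≤ 1 / π * π := mul_le_mul_of_nonneg_left h (by positivity)
  _ = 1 := by field_simp

lemma J0_low {x : ℝ} (h0 : 0 < x) (h1 : x ≤ 1) : Real.cos 1 ≤ J0 x := by
  have hmono := intervalIntegral.integral_mono_on (a := 0) (b := π)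
    (f := fun _ => Real.cos 1) (g := fun θ => Real.cos (x * Real.sin θ))
    (μ := volume) Real.pi_pos.le
    ((Continuous.intervalIntegrable continuous_const) _ _)
    ((Continuous.intervalIntegrable (by fun_prop)) _ _)
    (fun θ hθ => by
      apply Real.cos_le_cos_of_nonneg_of_le_pi
      · exact mul_nonneg h0.le (Real.sin_nonneg_of_nonneg_of_le_pi hθ.1 hθ.2)
      · linarith [Real.pi_gt_three]
      · exact mul_le_one₀ h1 (Real.sin_nonneg_of_nonneg_of_le_pi hθ.1 hθ.2)
          (Real.sin_le_one θ))
  rw [intervalIntegral.integral_const, sub_zero, smul_eq_mul] at hmono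
  rw [J0]
  calc Real.cos 1 = (1 / π) * (π * Real.cos 1) := by field_simp
  _ ≤ (1 / π) * ∫ θ in (0:ℝ)..π, Real.cos (x * Real.sin θ) :=
      mul_le_mul_of_nonneg_left hmono (by positivity)

lemma EE_one_ub : EE 1 ≤ 13 / 4 := by
  have h1 := J0_abs_le 1
  have h2 := g0_abs_le 1
  rw [abs_le] at h1 h2
  rw [EE, pp, uu, Real.sqrt_one]
  nlinarith [h1.1, h1.2, h2.1, h2.2]

lemma EE_one_lb : Real.cos 1 ^ 2 ≤ EE 1 := by
  have h := J0_low one_pos le_rfl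
  have hc := Real.cos_one_pos
  rw [EE, uu, Real.sqrt_one]
  nlinarith [sq_nonneg (pp 1)]

lemma J0_decay {x : ℝ} (hx : 0 < x) : x * J0 x ^ 2 ≤ 13 / 4 * Real.exp 4⁻¹ := by
  rcases le_or_gt 1 x with h | h
  · have h1 : x * J0 x ^ 2 = uu x ^ 2 := by rw [uu, mul_pow, Real.sq_sqrt hx.le]
    have h2 : uu x ^ 2 ≤ EE x := by rw [EE]; nlinarith [sq_nonneg (pp x)]
    have h3 := EE_upper h
    have h4 : EE 1 * Real.exp 4⁻¹ ≤ 13 / 4 * Real.exp 4⁻¹ :=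
      mul_le_mul_of_nonneg_right EE_one_ub (Real.exp_pos _).le
    linarith
  · have h1 := J0_abs_le x
    rw [abs_le] at h1
    have h2 : (1:ℝ) ≤ Real.exp 4⁻¹ := Real.one_le_exp (by norm_num)
    nlinarith [h1.1, h1.2]

lemma zero_gt_one {z : ℝ} (hz : 0 < z) (h0 : J0 z = 0) : 1 < z := by
  by_contra h
  push_neg at h
  have h1 := J0_low hz h
  have h2 := Real.cos_one_pos
  rw [h0] at h1
  linarith

lemma at_zero {z : ℝ} (hz : 0 < z) (h0 : J0 z = 0) :
    Real.cos 1 ^ 2 * Real.exp (-4⁻¹) ≤ z * g0 z ^ 2 := by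
  have h1 : 1 < z := zero_gt_one hz h0
  have hEz : EE z = z * g0 z ^ 2 := by
    have hss : Real.sqrt z ^ 2 = z := Real.sq_sqrt hz.le
    have e : pp z ^ 2 + uu z ^ 2 = Real.sqrt z ^ 2 * g0 z ^ 2 := by
      rw [pp, uu, h0]; ring
    rw [EE, e, hss]
  have h2 := EE_lower h1.le
  have h3 : Real.cos 1 ^ 2 * Real.exp (-4⁻¹) ≤ EE 1 * Real.exp (-4⁻¹) :=
    mul_le_mul_of_nonneg_right EE_one_lb (Real.exp_pos _).le
  linarith

theorem stmt11
    (rdet : ℝ) (hrdet : 0 < rdet)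
    (v : ℕ → ℝ) (hv_mono : StrictMono v) (hv_pos : ∀ n, 0 < v n)
    (hv_zero : ∀ n, J0 (rdet * v n) = 0)
    (hv_all : ∀ x : ℝ, 0 < x → J0 (rdet * x) = 0 → ∃ n, v n = x)
    (r : ℝ) (hr : 0 < r) (hr' : r ≤ rdet) (k : ℝ) :
    (∀ n : ℕ, J1 (rdet * v n) ≠ 0)
    ∧ ∃ C : ℝ, ∀ n : ℕ,
        |v n * J0 (r * v n) / ((k ^ 2 + (v n) ^ 2) * (J1 (rdet * v n)) ^ 3)| ≤ C := by
  set cL : ℝ := Real.cos 1 ^ 2 * Real.exp (-4⁻¹) with hcL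
  set B : ℝ := 13 / 4 * Real.exp 4⁻¹ with hB
  have hcL0 : 0 < cL := mul_pos (pow_pos Real.cos_one_pos 2) (Real.exp_pos _)
  have hB0 : 0 < B := by positivity
  have hz0 : ∀ n, 0 < rdet * v n := fun n => mul_pos hrdet (hv_pos n)
  have hJ1g : ∀ n, J1 (rdet * v n) = g0 (rdet * v n) := fun n => J1_eq_g0 (hz0 n).ne'
  have haz : ∀ n, cL ≤ (rdet * v n) * g0 (rdet * v n) ^ 2 :=
    fun n => at_zero (hz0 n) (hv_zero n)
  have hJ1ne : ∀ n : ℕ, J1 (rdet * v n) ≠ 0 := by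
    intro n h
    have h2 := haz n
    rw [← hJ1g n, h] at h2
    simp at h2
    linarith
  refine ⟨hJ1ne, Real.sqrt (B * rdet ^ 3 / (r * cL ^ 3)), fun n => ?_⟩
  set V : ℝ := v n with hV
  have hV0 : 0 < V := hv_pos n
  set z : ℝ := rdet * V with hz
  set C : ℝ := Real.sqrt (B * rdet ^ 3 / (r * cL ^ 3)) with hC
  have hC0 : 0 ≤ C := Real.sqrt_nonneg _
  have hC2 : C ^ 2 = B * rdet ^ 3 / (r * cL ^ 3) := Real.sq_sqrt (by positivity)
  have hDne : (k ^ 2 + V ^ 2) * (J1 z) ^ 3 ≠ 0 := by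
    apply mul_ne_zero
    · positivity
    · exact pow_ne_zero _ (hJ1ne n)
  rw [abs_div, div_le_iff₀ (abs_pos.2 hDne)]
  -- reduce to squares
  have key : (V * J0 (r * V)) ^ 2 ≤ C ^ 2 * ((k ^ 2 + V ^ 2) * (J1 z) ^ 3) ^ 2 := by
    have hq1 : cL / z ≤ g0 z ^ 2 := (div_le_iff₀ (hz0 n)).2 (by linarith [haz n, mul_comm (g0 z ^ 2) z])
    have hq3 : (cL / z) ^ 3 ≤ (g0 z ^ 2) ^ 3 :=
      pow_le_pow_left₀ (by positivity) hq1 3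
    have hJ6 : (J1 z) ^ 6 = (g0 z ^ 2) ^ 3 := by rw [hJ1g n]; ring
    have h5 : V ^ 4 ≤ (k ^ 2 + V ^ 2) ^ 2 := by nlinarith [sq_nonneg k, sq_nonneg V, sq_nonneg (k * V)]
    have step : V ^ 4 * (cL / z) ^ 3 ≤ (k ^ 2 + V ^ 2) ^ 2 * (J1 z) ^ 6 := by
      rw [hJ6]
      exact mul_le_mul h5 hq3 (by positivity) (by positivity)
    have hRHS : C ^ 2 * (V ^ 4 * (cL / z) ^ 3) = B * V / r := by
      rw [hC2, hz]
      field_simp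
    have hLHS : (V * J0 (r * V)) ^ 2 ≤ B * V / r := by
      have hdec := J0_decay (mul_pos hr hV0)
      have hw : J0 (r * V) ^ 2 ≤ B / (r * V) := by
        rw [le_div_iff₀ (mul_pos hr hV0)]
        linarith [hdec]
      calc (V * J0 (r * V)) ^ 2 = V ^ 2 * J0 (r * V) ^ 2 := by ring
      _ ≤ V ^ 2 * (B / (r * V)) := mul_le_mul_of_nonneg_left hw (sq_nonneg V)
      _ = B * V / r := by field_simp
    calc (V * J0 (r * V)) ^ 2 ≤ B * V / r := hLHS
    _ = C ^ 2 * (V ^ 4 * (cL / z) ^ 3) := hRHS.symm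
    _ ≤ C ^ 2 * ((k ^ 2 + V ^ 2) ^ 2 * (J1 z) ^ 6) :=
        mul_le_mul_of_nonneg_left step (sq_nonneg C)
    _ = C ^ 2 * ((k ^ 2 + V ^ 2) * (J1 z) ^ 3) ^ 2 := by ring
  have h6 := Real.sqrt_le_sqrt key
  rw [Real.sqrt_sq_eq_abs] at h6
  calc |V * J0 (r * V)| ≤ Real.sqrt (C ^ 2 * ((k ^ 2 + V ^ 2) * (J1 z) ^ 3) ^ 2) := h6
  _ = C * |(k ^ 2 + V ^ 2) * (J1 z) ^ 3| := by
      rw [Real.sqrt_mul (sq_nonneg C), Real.sqrt_sq hC0, Real.sqrt_sq_eq_abs]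
end

section
/- If x > 0 and J₀(x) = 0, then J₁(x) ≠ 0; that is, J₁ does not vanish at any positive zero of J₀. -/
open Real MeasureTheory

open intervalIntegral Set Filter


noncomputable def I0 (x : ℝ) : ℝ := ∫ θ in (0:ℝ)..π, Real.cos (x * Real.sin θ)
noncomputable def K1 (x : ℝ) : ℝ := ∫ θ in (0:ℝ)..π, -(Real.sin θ * Real.sin (x * Real.sin θ))
noncomputable def K2 (x : ℝ) : ℝ := ∫ θ in (0:ℝ)..π, -(Real.sin θ ^ 2 * Real.cos (x * Real.sin θ))

lemma hI0 (x : ℝ) : HasDerivAt I0 (K1 x) x := by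
  have := intervalIntegral.hasDerivAt_integral_of_dominated_loc_of_deriv_le
    (F := fun x θ => Real.cos (x * Real.sin θ))
    (F' := fun x θ => -(Real.sin θ * Real.sin (x * Real.sin θ)))
    (a := 0) (b := π) (μ := volume) (x₀ := x) (bound := fun _ => 1)
    (Metric.ball_mem_nhds x one_pos)
    (Filter.Eventually.of_forall fun y =>
      (Continuous.aestronglyMeasurable (by fun_prop)))
    ((Continuous.intervalIntegrable (by fun_prop) _ _) )
    (Continuous.aestronglyMeasurable (by fun_prop))
    (Filter.Eventually.of_forall fun θ _ y _ => by
      have h1 := abs_sin_le_one θ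
      have h2 := abs_sin_le_one (y * Real.sin θ)
      rw [norm_neg, norm_mul]
      calc ‖Real.sin θ‖ * ‖Real.sin (y * Real.sin θ)‖ ≤ 1 * 1 := by
            exact mul_le_mul h1 h2 (abs_nonneg _) zero_le_one
        _ = 1 := by ring)
    (Continuous.intervalIntegrable continuous_const _ _)
    (Filter.Eventually.of_forall fun θ _ y _ => by
      have h : HasDerivAt (fun x : ℝ => x * Real.sin θ) (Real.sin θ) y := by
        simpa using (hasDerivAt_id y).mul_const (Real.sin θ)
      have := h.cos
      refine this.congr_deriv ?_
      ring)
  exact this.2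

lemma hK1 (x : ℝ) : HasDerivAt K1 (K2 x) x := by
  have := intervalIntegral.hasDerivAt_integral_of_dominated_loc_of_deriv_le
    (F := fun x θ => -(Real.sin θ * Real.sin (x * Real.sin θ)))
    (F' := fun x θ => -(Real.sin θ ^ 2 * Real.cos (x * Real.sin θ)))
    (a := 0) (b := π) (μ := volume) (x₀ := x) (bound := fun _ => 1)
    (Metric.ball_mem_nhds x one_pos)
    (Filter.Eventually.of_forall fun y =>
      (Continuous.aestronglyMeasurable (by fun_prop)))
    ((Continuous.intervalIntegrable (by fun_prop) _ _) )
    (Continuous.aestronglyMeasurable (by fun_prop))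
    (Filter.Eventually.of_forall fun θ _ y _ => by
      have h1 := abs_sin_le_one θ
      have h2 := abs_cos_le_one (y * Real.sin θ)
      rw [norm_neg, norm_mul]
      have : ‖Real.sin θ ^ 2‖ ≤ 1 := by
        rw [norm_pow]
        exact pow_le_one₀ (abs_nonneg _) h1
      calc ‖Real.sin θ ^ 2‖ * ‖Real.cos (y * Real.sin θ)‖ ≤ 1 * 1 := by
            exact mul_le_mul this h2 (norm_nonneg _) zero_le_one
        _ = 1 := by ring)
    (Continuous.intervalIntegrable continuous_const _ _)
    (Filter.Eventually.of_forall fun θ _ y _ => by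
      have h : HasDerivAt (fun x : ℝ => x * Real.sin θ) (Real.sin θ) y := by
        simpa using (hasDerivAt_id y).mul_const (Real.sin θ)
      have := ((h.sin).const_mul (Real.sin θ)).neg
      refine this.congr_deriv ?_
      ring)
  exact this.2

lemma bessel_ode (x : ℝ) : x * K2 x + K1 x + x * I0 x = 0 := by
  have key : ∫ θ in (0:ℝ)..π,
      (x * -(Real.sin θ ^ 2 * Real.cos (x * Real.sin θ)) +
        -(Real.sin θ * Real.sin (x * Real.sin θ)) + x * Real.cos (x * Real.sin θ)) = 0 := by
    have hderiv : ∀ θ ∈ Set.uIcc (0:ℝ) π,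
        HasDerivAt (fun θ => Real.cos θ * Real.sin (x * Real.sin θ))
          (x * -(Real.sin θ ^ 2 * Real.cos (x * Real.sin θ)) +
            -(Real.sin θ * Real.sin (x * Real.sin θ)) + x * Real.cos (x * Real.sin θ)) θ := by
      intro θ _
      have h1 : HasDerivAt (fun θ : ℝ => x * Real.sin θ) (x * Real.cos θ) θ :=
        (hasDerivAt_sin θ).const_mul x
      have h2 := (hasDerivAt_cos θ).mul h1.sin
      refine h2.congr_deriv ?_
      linear_combination (x * Real.cos (x * Real.sin θ)) * (sin_sq_add_cos_sq θ)
    have hint : IntervalIntegrable (fun θ =>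
        x * -(Real.sin θ ^ 2 * Real.cos (x * Real.sin θ)) +
          -(Real.sin θ * Real.sin (x * Real.sin θ)) + x * Real.cos (x * Real.sin θ))
        volume 0 π := (Continuous.intervalIntegrable (by fun_prop) _ _)
    rw [intervalIntegral.integral_eq_sub_of_hasDerivAt hderiv hint]
    simp [Real.sin_pi, Real.cos_pi]
  have e1 : IntervalIntegrable (fun θ => x * -(Real.sin θ ^ 2 * Real.cos (x * Real.sin θ)))
      volume 0 π := (Continuous.intervalIntegrable (by fun_prop) _ _)
  have e2 : IntervalIntegrable (fun θ => -(Real.sin θ * Real.sin (x * Real.sin θ)))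
      volume 0 π := (Continuous.intervalIntegrable (by fun_prop) _ _)
  have e3 : IntervalIntegrable (fun θ => x * Real.cos (x * Real.sin θ))
      volume 0 π := (Continuous.intervalIntegrable (by fun_prop) _ _)
  rw [intervalIntegral.integral_add (e1.add e2) e3, intervalIntegral.integral_add e1 e2] at key
  rw [intervalIntegral.integral_const_mul, intervalIntegral.integral_const_mul] at key
  unfold I0 K1 K2
  linarith [key]

lemma I0_zero : I0 0 = π := by
  unfold I0
  simp


lemma hJ0 (x : ℝ) : HasDerivAt J0 ((1 / π) * K1 x) x := by
  have := (hI0 x).const_mul (1 / π)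
  exact this

lemma J1_eq {x : ℝ} (hx : x ≠ 0) : J1 x = -((1 / π) * K1 x) := by
  have hsplit : (∫ θ in (0:ℝ)..π, Real.cos (θ - x * Real.sin θ))
      = (∫ θ in (0:ℝ)..π, Real.cos θ * Real.cos (x * Real.sin θ))
        + ∫ θ in (0:ℝ)..π, Real.sin θ * Real.sin (x * Real.sin θ) := by
    rw [← intervalIntegral.integral_add (Continuous.intervalIntegrable (by fun_prop) _ _)
      (Continuous.intervalIntegrable (by fun_prop) _ _)]
    apply intervalIntegral.integral_congr
    intro θ _
    exact Real.cos_sub θ (x * Real.sin θ)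
  have hfirst : (∫ θ in (0:ℝ)..π, Real.cos θ * Real.cos (x * Real.sin θ)) = 0 := by
    have hderiv : ∀ θ ∈ Set.uIcc (0:ℝ) π,
        HasDerivAt (fun θ => (1 / x) * Real.sin (x * Real.sin θ))
          (Real.cos θ * Real.cos (x * Real.sin θ)) θ := by
      intro θ _
      have h1 : HasDerivAt (fun θ : ℝ => x * Real.sin θ) (x * Real.cos θ) θ :=
        (hasDerivAt_sin θ).const_mul x
      have h2 := h1.sin.const_mul (1 / x)
      refine h2.congr_deriv ?_
      field_simp
    rw [intervalIntegral.integral_eq_sub_of_hasDerivAt hderiv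
      (Continuous.intervalIntegrable (by fun_prop) _ _)]
    simp
  have hsecond : (∫ θ in (0:ℝ)..π, Real.sin θ * Real.sin (x * Real.sin θ)) = -(K1 x) := by
    unfold K1
    rw [intervalIntegral.integral_neg]
    ring
  unfold J1
  rw [hsplit, hfirst, hsecond]
  ring

lemma J0_eq_I0 (x : ℝ) : J0 x = (1 / π) * I0 x := rfl

lemma bessel_ode' (x : ℝ) : x * ((1 / π) * K2 x) + (1 / π) * K1 x + x * J0 x = 0 := by
  have h := bessel_ode x
  rw [J0_eq_I0]
  linear_combination (1 / π) * h

noncomputable def g (x : ℝ) : ℝ := x ^ 2 * (J0 x ^ 2 + ((1 / π) * K1 x) ^ 2)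

lemma hg {x : ℝ} (hx : 0 < x) : HasDerivAt g (2 * x * J0 x ^ 2) x := by
  have h1 : HasDerivAt (fun x : ℝ => x ^ 2) (2 * x) x := by simpa using hasDerivAt_pow 2 x
  have h2 : HasDerivAt (fun x => J0 x ^ 2) ((2 : ℕ) * J0 x ^ 1 * ((1 / π) * K1 x)) x :=
    (hJ0 x).pow 2
  have h3 : HasDerivAt (fun x => ((1 / π) * K1 x) ^ 2)
      ((2 : ℕ) * ((1 / π) * K1 x) ^ 1 * ((1 / π) * K2 x)) x := ((hK1 x).const_mul (1 / π)).pow 2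
  have h4 := h1.mul (h2.add h3)
  refine h4.congr_deriv ?_
  have hode := bessel_ode' x
  simp only [Pi.add_apply]
  push_cast
  linear_combination (2 * x * ((1 / π) * K1 x)) * hode

lemma J0_zero : J0 0 = 1 := by
  unfold J0
  simp [Real.pi_ne_zero]

theorem stmt19 : ∀ x : ℝ, 0 < x → J0 x = 0 → J1 x ≠ 0 := by
  intro x₀ hx₀ hJ0x₀ hJ1x₀
  have hK1x₀ : (1 / π) * K1 x₀ = 0 := by
    have := J1_eq (ne_of_gt hx₀)
    rw [hJ1x₀] at this
    linarith
  have hgx₀ : g x₀ = 0 := by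
    unfold g
    rw [hJ0x₀, hK1x₀]
    ring
  have hzero : ∀ t ∈ Ioc (0:ℝ) x₀, J0 t = 0 := by
    intro t ht
    have hmono : MonotoneOn g (Icc t x₀) := by
      apply monotoneOn_of_deriv_nonneg (convex_Icc t x₀)
      · apply ContinuousOn.congr (f := g) ?_ (fun y _ => rfl)
        intro y hy
        exact ((hg (lt_of_lt_of_le ht.1 hy.1)).continuousAt).continuousWithinAt
      · intro y hy
        rw [interior_Icc] at hy
        exact ((hg (lt_trans ht.1 hy.1)).differentiableAt).differentiableWithinAt
      · intro y hy
        rw [interior_Icc] at hy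
        rw [(hg (lt_trans ht.1 hy.1)).deriv]
        have hy0 : (0:ℝ) < y := lt_trans ht.1 hy.1
        positivity
    have hle : g t ≤ g x₀ := hmono (left_mem_Icc.mpr ht.2) (right_mem_Icc.mpr ht.2) ht.2
    rw [hgx₀] at hle
    have hge : 0 ≤ g t := by unfold g; positivity
    have hgt : g t = 0 := le_antisymm hle hge
    unfold g at hgt
    have hsum : J0 t ^ 2 + (1 / π * K1 t) ^ 2 = 0 :=
      (mul_eq_zero.mp hgt).resolve_left (pow_ne_zero 2 (ne_of_gt ht.1))
    have hsq : J0 t ^ 2 = 0 := by nlinarith [sq_nonneg (1 / π * K1 t), sq_nonneg (J0 t)]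
    exact pow_eq_zero_iff two_ne_zero |>.mp hsq
  have hmem : Ioc (0:ℝ) x₀ ∈ nhdsWithin (0:ℝ) (Ioi 0) :=
    Ioc_mem_nhdsGT hx₀
  have h2 : Tendsto J0 (nhdsWithin (0:ℝ) (Ioi 0)) (nhds 0) := by
    apply Tendsto.congr' _ (tendsto_const_nhds (α := ℝ) (x := (0:ℝ)))
    filter_upwards [hmem] with t ht
    exact (hzero t ht).symm
  have h1 : Tendsto J0 (nhdsWithin (0:ℝ) (Ioi 0)) (nhds 1) := by
    rw [← J0_zero]
    exact ((hJ0 0).continuousAt).continuousWithinAt.tendsto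
  have := tendsto_nhds_unique h2 h1
  norm_num at this
end
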